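/- Combining the two previous estimates: for a partition $0 = t_0 < \cdots < t_N$ with $k_n = t_n - t_{n-1}$ and nonnegative reals $a_n$, one has $\sum_{n=1}^N a_n \le (1 + \log(t_N/k_1))^{1/2} \left(\sum_{n=1}^N \frac{t_n}{k_n} a_n^2\right)^{1/2}$. -/

import Mathlib

open Finset

/-- Combined estimate: `∑ aₙ ≤ (1 + log(t_N/k₁))^{1/2} (∑ (tₙ/kₙ) aₙ²)^{1/2}`. -/
theorem sum_le_log_weighted (N : ℕ) (hN : 1 ≤ N) (t : ℕ → ℝ) (ht0 : t 0 = 0)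
    (hmono : ∀ n, n < N → t n < t (n + 1)) (a : ℕ → ℝ)
    (ha : ∀ n ∈ Finset.Icc 1 N, 0 ≤ a n) :
    ∑ n ∈ Finset.Icc 1 N, a n ≤
      (1 + Real.log (t N / (t 1 - t 0))) ^ ((1 : ℝ) / 2) *
        (∑ n ∈ Finset.Icc 1 N, t n / (t n - t (n - 1)) * a n ^ 2) ^ ((1 : ℝ) / 2) := by
  -- strict monotonicity up to N
  have hlt : ∀ m n, m < n → n ≤ N → t m < t n := by
    intro m n hmn hnN
    induction n with
    | zero => omega
    | succ k ih =>
      rcases Nat.lt_succ_iff_lt_or_eq.mp hmn with h | h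
      · exact (ih h (by omega)).trans (hmono k (by omega))
      · subst h; exact hmono m (by omega)
  have hpos : ∀ n, 1 ≤ n → n ≤ N → 0 < t n := by
    intro n h1 hn; have := hlt 0 n h1 hn; linarith [ht0 ▸ this]
  -- positivity of increments
  have hkpos : ∀ n ∈ Finset.Icc 1 N, 0 < t n - t (n - 1) := by
    intro n hn
    simp only [Finset.mem_Icc] at hn
    have : t (n - 1) < t n := by
      have : (n - 1) + 1 = n := by omega
      have h := hlt (n - 1) n (by omega) hn.2
      exact h
    linarith
  set g : ℕ → ℝ := fun n => (t n - t (n - 1)) / t n with hg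
  have hgpos : ∀ n ∈ Finset.Icc 1 N, 0 < g n := by
    intro n hn
    simp only [Finset.mem_Icc] at hn
    exact div_pos (hkpos n (by simp [Finset.mem_Icc]; omega)) (hpos n hn.1 hn.2)
  -- Cauchy-Schwarz (Sedrakyan form)
  have hCS := Finset.sq_sum_div_le_sum_sq_div (Finset.Icc 1 N) a hgpos
  have hB : ∀ n ∈ Finset.Icc 1 N, a n ^ 2 / g n = t n / (t n - t (n - 1)) * a n ^ 2 := by
    intro n hn
    simp only [Finset.mem_Icc] at hn
    have h1 : t n ≠ 0 := (hpos n hn.1 hn.2).ne'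
    have h2 : t n - t (n - 1) ≠ 0 := (hkpos n (by simp [Finset.mem_Icc]; omega)).ne'
    simp only [hg]; rw [div_div_eq_mul_div]
    ring
  -- bound on ∑ g n
  have hsumg : ∑ n ∈ Finset.Icc 1 N, g n ≤ 1 + Real.log (t N / (t 1 - t 0)) := by
    have h1N : (1 : ℕ) ∈ Finset.Icc 1 N := by simp [Finset.mem_Icc]; omega
    rw [show Finset.Icc 1 N = insert 1 (Finset.Icc 2 N) by
      ext x; simp [Finset.mem_Icc, Finset.mem_insert]; omega]
    rw [Finset.sum_insert (by simp [Finset.mem_Icc])]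
    have hg1 : g 1 = 1 := by
      simp only [hg, ht0]
      simp [div_self (hpos 1 le_rfl hN).ne']
    have hterm : ∀ n ∈ Finset.Icc 2 N, g n ≤ Real.log (t n) - Real.log (t (n - 1)) := by
      intro n hn
      simp only [Finset.mem_Icc] at hn
      have htn : 0 < t n := hpos n (by omega) hn.2
      have htn1 : 0 < t (n - 1) := hpos (n - 1) (by omega) (by omega)
      have hlog := Real.log_le_sub_one_of_pos (div_pos htn1 htn)
      rw [Real.log_div htn1.ne' htn.ne'] at hlog
      have : g n = 1 - t (n - 1) / t n := by
        simp only [hg]; rw [sub_div, div_self htn.ne']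
      rw [this]; linarith
    have htel : ∑ n ∈ Finset.Icc 2 N, (Real.log (t n) - Real.log (t (n - 1))) =
        Real.log (t N) - Real.log (t 1) := by
      have : Finset.Icc 2 N = Finset.Ico 2 (N + 1) := by
        ext x; simp [Finset.mem_Icc, Finset.mem_Ico]
      rw [this, Finset.sum_Ico_eq_sum_range]
      have hNN : N + 1 - 2 = N - 1 := by omega
      rw [hNN]
      have heq : ∀ i ∈ Finset.range (N - 1),
          Real.log (t (2 + i)) - Real.log (t (2 + i - 1)) =
          (fun j => Real.log (t (j + 1))) (i + 1) - (fun j => Real.log (t (j + 1))) i := by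
        intro i _
        have h1 : 2 + i = i + 1 + 1 := by omega
        have h2 : 2 + i - 1 = i + 1 := by omega
        rw [h1]
        norm_num
      rw [Finset.sum_congr rfl heq, Finset.sum_range_sub (fun j => Real.log (t (j + 1)))]
      have : N - 1 + 1 = N := by omega
      rw [this]
    calc g 1 + ∑ n ∈ Finset.Icc 2 N, g n
        ≤ 1 + (Real.log (t N) - Real.log (t 1)) := by
          rw [hg1]
          exact add_le_add le_rfl ((Finset.sum_le_sum hterm).trans htel.le)
      _ = 1 + Real.log (t N / (t 1 - t 0)) := by
          rw [ht0, sub_zero, Real.log_div (hpos N hN le_rfl).ne' (hpos 1 le_rfl hN).ne']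
  -- assemble
  set S := ∑ n ∈ Finset.Icc 1 N, a n with hS
  set B := ∑ n ∈ Finset.Icc 1 N, t n / (t n - t (n - 1)) * a n ^ 2 with hBdef
  set C := 1 + Real.log (t N / (t 1 - t 0)) with hC
  have hS0 : 0 ≤ S := Finset.sum_nonneg ha
  have hB0 : 0 ≤ B := Finset.sum_nonneg fun n hn => by
    have := hgpos n hn
    exact mul_nonneg (le_of_lt (by
      simp only [Finset.mem_Icc] at hn
      exact div_pos (hpos n hn.1 hn.2) (hkpos n (by simp [Finset.mem_Icc]; omega))))
      (sq_nonneg _)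
  have hgsum0 : 0 ≤ ∑ n ∈ Finset.Icc 1 N, g n :=
    Finset.sum_nonneg fun n hn => (hgpos n hn).le
  have hC0 : 0 ≤ C := le_trans hgsum0 hsumg
  have hkey : S ^ 2 ≤ C * B := by
    have h1 : S ^ 2 ≤ (∑ n ∈ Finset.Icc 1 N, g n) * B := by
      rw [hBdef, ← Finset.sum_congr rfl hB]
      have hgsumpos : 0 < ∑ n ∈ Finset.Icc 1 N, g n :=
        Finset.sum_pos hgpos ⟨1, by simp [Finset.mem_Icc]; omega⟩
      calc S ^ 2 = S ^ 2 / (∑ n ∈ Finset.Icc 1 N, g n) * (∑ n ∈ Finset.Icc 1 N, g n) :=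
            (div_mul_cancel₀ _ hgsumpos.ne').symm
          _ ≤ (∑ n ∈ Finset.Icc 1 N, a n ^ 2 / g n) * (∑ n ∈ Finset.Icc 1 N, g n) := by
            apply mul_le_mul_of_nonneg_right hCS hgsum0
          _ = (∑ n ∈ Finset.Icc 1 N, g n) * (∑ n ∈ Finset.Icc 1 N, a n ^ 2 / g n) :=
            mul_comm _ _
    exact h1.trans (mul_le_mul_of_nonneg_right hsumg hB0)
  have : S ≤ Real.sqrt (C * B) := by
    rw [← Real.sqrt_sq hS0]
    exact Real.sqrt_le_sqrt hkey
  calc S ≤ Real.sqrt (C * B) := this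
    _ = Real.sqrt C * Real.sqrt B := Real.sqrt_mul hC0 B
    _ = C ^ ((1:ℝ)/2) * B ^ ((1:ℝ)/2) := by
        rw [Real.sqrt_eq_rpow, Real.sqrt_eq_rpow]
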